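/- The complete probability polytope CP_n has exactly 2^n facets; equivalently, it is a simplex on 2^n affinely independent vertices, and each of the 2^n inequalities h(ε) ≥ 0 (with h(ε) = Σ_{T ⊇ supp(ε)} (−1)^{|T|−|supp(ε)|} p_T, p_∅ = 1) defines a facet of CP_n. -/

import Mathlib

/-- The vertex `u_ε` of `CP_n`, indexed by the nonempty subsets of `{1,…,n}`. -/
noncomputable def cpVertex (n : ℕ) (ε : Fin n → Bool) :
    {S : Finset (Fin n) // S.Nonempty} → ℝ :=
  fun S => ∏ i ∈ S.1, (if ε i then (1 : ℝ) else 0)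

/-- The complete probability polytope `CP_n`. -/
noncomputable def CP (n : ℕ) : Set ({S : Finset (Fin n) // S.Nonempty} → ℝ) :=
  convexHull ℝ (Set.range (cpVertex n))

/-- The inclusion–exclusion functional `h(ε)(p) = ∑_{T ⊇ supp ε} (−1)^{|T|−|supp ε|} p_T`,
with the convention `p_∅ = 1`. -/
noncomputable def hFun (n : ℕ) (ε : Fin n → Bool)
    (p : {S : Finset (Fin n) // S.Nonempty} → ℝ) : ℝ :=
  ∑ T : Finset (Fin n),
    if (Finset.univ.filter (fun i => ε i = true)) ⊆ T then
      (-1 : ℝ) ^ (T.card - (Finset.univ.filter (fun i => ε i = true)).card) *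
        (if h : T.Nonempty then p ⟨T, h⟩ else 1)
    else 0

/-- The face of `CP_n` cut out by the valid inequality `h(ε) ≥ 0`. -/
noncomputable def cpFace (n : ℕ) (ε : Fin n → Bool) :
    Set ({S : Finset (Fin n) // S.Nonempty} → ℝ) :=
  {p ∈ CP n | hFun n ε p = 0}

open Finset

section aux
variable {n : ℕ}

def csupp (ε : Fin n → Bool) : Finset (Fin n) := Finset.univ.filter (fun i => ε i = true)

lemma mem_csupp {ε : Fin n → Bool} {i : Fin n} : i ∈ csupp ε ↔ ε i = true := by
  simp [csupp]

lemma csupp_inj {ε δ : Fin n → Bool} (h : csupp ε = csupp δ) : ε = δ := by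
  funext i
  have h1 : ε i = true ↔ δ i = true := by rw [← mem_csupp, ← mem_csupp, h]
  cases hε : ε i <;> cases hδ : δ i <;> simp_all

lemma hFun_def (ε : Fin n → Bool) (p : {S : Finset (Fin n) // S.Nonempty} → ℝ) :
    hFun n ε p = ∑ T : Finset (Fin n),
      if csupp ε ⊆ T then
        (-1 : ℝ) ^ (T.card - (csupp ε).card) * (if h : T.Nonempty then p ⟨T, h⟩ else 1)
      else 0 := rfl

lemma cpVertex_apply (ε : Fin n → Bool) (S : {S : Finset (Fin n) // S.Nonempty}) :
    cpVertex n ε S = if S.1 ⊆ csupp ε then 1 else 0 := by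
  unfold cpVertex
  rw [Finset.prod_boole]
  congr 1
  simp only [eq_iff_iff]
  constructor
  · intro h i hi; exact mem_csupp.mpr (h i hi)
  · intro h i hi; exact mem_csupp.mp (h hi)

lemma cpVertex_injective : Function.Injective (cpVertex n) := by
  intro ε δ h
  funext i
  have := congrFun h ⟨{i}, Finset.singleton_nonempty i⟩
  simp only [cpVertex, Finset.prod_singleton] at this
  cases hε : ε i <;> cases hδ : δ i <;> simp_all

lemma hFun_vertex (ε δ : Fin n → Bool) :
    hFun n ε (cpVertex n δ) = if δ = ε then 1 else 0 := by
  rw [hFun_def]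
  have hterm : ∀ T : Finset (Fin n),
      (if csupp ε ⊆ T then
        (-1 : ℝ) ^ (T.card - (csupp ε).card) *
          (if h : T.Nonempty then cpVertex n δ ⟨T, h⟩ else 1)
      else 0)
      = if csupp ε ⊆ T ∧ T ⊆ csupp δ then (-1 : ℝ) ^ (T.card - (csupp ε).card) else 0 := by
    intro T
    by_cases hA : csupp ε ⊆ T
    · have hX : (if h : T.Nonempty then cpVertex n δ ⟨T, h⟩ else 1)
          = if T ⊆ csupp δ then (1:ℝ) else 0 := by
        by_cases hT : T.Nonempty
        · rw [dif_pos hT, cpVertex_apply]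
        · rw [dif_neg hT]
          have : T = ∅ := Finset.not_nonempty_iff_eq_empty.mp hT
          simp [this]
      rw [if_pos hA, hX, mul_ite, mul_one, mul_zero]
      by_cases hB : T ⊆ csupp δ
      · rw [if_pos hB, if_pos ⟨hA, hB⟩]
      · rw [if_neg hB, if_neg (by tauto)]
    · rw [if_neg hA, if_neg (by tauto)]
  rw [Finset.sum_congr rfl (fun T _ => hterm T)]
  by_cases hAB : csupp ε ⊆ csupp δ
  · rw [← Finset.sum_filter]
    have := Finset.sum_nbij' (s := Finset.univ.filter (fun T => csupp ε ⊆ T ∧ T ⊆ csupp δ))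
      (t := (csupp δ \ csupp ε).powerset)
      (f := fun T => (-1 : ℝ) ^ (T.card - (csupp ε).card))
      (g := fun U => (-1 : ℝ) ^ U.card)
      (i := fun T => T \ csupp ε) (j := fun U => csupp ε ∪ U)
      (by intro T hT
          simp only [Finset.mem_filter, Finset.mem_univ, true_and] at hT
          simp only [Finset.mem_powerset]
          exact Finset.sdiff_subset_sdiff hT.2 le_rfl)
      (by intro U hU
          simp only [Finset.mem_powerset] at hU
          simp only [Finset.mem_filter, Finset.mem_univ, true_and]
          constructor
          · exact Finset.subset_union_left
          · exact Finset.union_subset hAB (hU.trans (Finset.sdiff_subset)))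
      (by intro T hT
          simp only [Finset.mem_filter, Finset.mem_univ, true_and] at hT
          exact Finset.union_sdiff_of_subset hT.1)
      (by intro U hU
          simp only [Finset.mem_powerset] at hU
          have hd : Disjoint (csupp ε) U :=
            Finset.disjoint_right.mpr (fun a haU haA =>
              (Finset.mem_sdiff.mp (hU haU)).2 haA)
          show (csupp ε ∪ U) \ csupp ε = U
          rw [Finset.union_sdiff_cancel_left hd])
      (by intro T hT
          simp only [Finset.mem_filter, Finset.mem_univ, true_and] at hT
          show (-1 : ℝ) ^ (T.card - (csupp ε).card) = (-1 : ℝ) ^ (T \ csupp ε).card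
          rw [Finset.card_sdiff_of_subset hT.1])
    rw [this]
    have hcast : ∑ U ∈ (csupp δ \ csupp ε).powerset, (-1 : ℝ) ^ U.card
        = ((∑ U ∈ (csupp δ \ csupp ε).powerset, (-1 : ℤ) ^ U.card : ℤ) : ℝ) := by
      push_cast; rfl
    rw [hcast, Finset.sum_powerset_neg_one_pow_card]
    have hiff : csupp δ \ csupp ε = ∅ ↔ δ = ε := by
      rw [Finset.sdiff_eq_empty_iff_subset]
      constructor
      · intro h; exact (csupp_inj (Finset.Subset.antisymm hAB h)).symm
      · intro h; subst h; exact Finset.Subset.refl _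
    by_cases h : δ = ε
    · rw [if_pos (hiff.mpr h), if_pos h]; norm_num
    · rw [if_neg (fun c => h (hiff.mp c)), if_neg h]; norm_num
  · have hne : ¬ δ = ε := by
      intro h; subst h; exact hAB le_rfl
    rw [if_neg hne]
    apply Finset.sum_eq_zero
    intro T _
    rw [if_neg]
    rintro ⟨h1, h2⟩
    exact hAB (h1.trans h2)

/-- affine decomposition of `hFun`. -/
lemma hFun_eq (ε : Fin n → Bool) (p : {S : Finset (Fin n) // S.Nonempty} → ℝ) :
    hFun n ε p = (∑ S : {S : Finset (Fin n) // S.Nonempty},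
        (if csupp ε ⊆ S.1 then (-1 : ℝ) ^ (S.1.card - (csupp ε).card) else 0) * p S)
      + (if csupp ε = ∅ then 1 else 0) := by
  rw [hFun_def]
  rw [← Finset.sum_filter_add_sum_filter_not Finset.univ (fun T => T.Nonempty)]
  congr 1
  · rw [Finset.sum_subtype (p := fun T : Finset (Fin n) => T.Nonempty)
      (Finset.univ.filter (fun T : Finset (Fin n) => T.Nonempty))
      (by intro x; simp) (fun T => if csupp ε ⊆ T then
        (-1 : ℝ) ^ (T.card - (csupp ε).card) * (if h : T.Nonempty then p ⟨T, h⟩ else 1)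
      else 0)]
    apply Finset.sum_congr rfl
    intro S _
    rw [dif_pos S.2]
    by_cases h : csupp ε ⊆ S.1
    · rw [if_pos h, if_pos h]
    · rw [if_neg h, if_neg h, zero_mul]
  · have : Finset.univ.filter (fun T : Finset (Fin n) => ¬ T.Nonempty) = {∅} := by
      ext T; simp [Finset.not_nonempty_iff_eq_empty]
    rw [this, Finset.sum_singleton]
    simp [Finset.subset_empty]

/-- value of `hFun` on a linear combination of the vertices. -/
lemma hFun_comb (ε : Fin n → Bool) (w : (Fin n → Bool) → ℝ) :
    hFun n ε (∑ δ, w δ • cpVertex n δ)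
      = w ε + (1 - ∑ δ, w δ) * (if csupp ε = ∅ then 1 else 0) := by
  rw [hFun_eq]
  have h1 : ∀ S : {S : Finset (Fin n) // S.Nonempty},
      (if csupp ε ⊆ S.1 then (-1 : ℝ) ^ (S.1.card - (csupp ε).card) else 0)
        * (∑ δ, w δ • cpVertex n δ) S
      = ∑ δ, w δ * ((if csupp ε ⊆ S.1 then (-1 : ℝ) ^ (S.1.card - (csupp ε).card) else 0)
          * cpVertex n δ S) := by
    intro S
    rw [Finset.sum_apply, Finset.mul_sum]
    apply Finset.sum_congr rfl
    intro δ _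
    simp only [Pi.smul_apply, smul_eq_mul]
    ring
  rw [Finset.sum_congr rfl (fun S _ => h1 S), Finset.sum_comm]
  have h2 : ∀ δ, ∑ S : {S : Finset (Fin n) // S.Nonempty},
      w δ * ((if csupp ε ⊆ S.1 then (-1 : ℝ) ^ (S.1.card - (csupp ε).card) else 0)
          * cpVertex n δ S)
      = w δ * ((if δ = ε then 1 else 0) - (if csupp ε = ∅ then 1 else 0)) := by
    intro δ
    rw [← Finset.mul_sum]
    congr 1
    have := hFun_eq ε (cpVertex n δ)
    rw [hFun_vertex] at this
    linarith
  rw [Finset.sum_congr rfl (fun δ _ => h2 δ)]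
  have h3 : ∑ δ, w δ * ((if δ = ε then (1:ℝ) else 0) - (if csupp ε = ∅ then 1 else 0))
      = w ε - (∑ δ, w δ) * (if csupp ε = ∅ then 1 else 0) := by
    rw [Finset.sum_congr rfl (fun δ _ => mul_sub (w δ) _ _), Finset.sum_sub_distrib,
      ← Finset.sum_mul]
    congr 1
    simp [mul_ite]
  rw [h3]; ring

lemma hFun_comb_one (ε : Fin n → Bool) (w : (Fin n → Bool) → ℝ) (hw : ∑ δ, w δ = 1) :
    hFun n ε (∑ δ, w δ • cpVertex n δ) = w ε := by
  rw [hFun_comb, hw]; ring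

lemma hFun_affine (ε : Fin n → Bool) (a b : ℝ) (x y : {S : Finset (Fin n) // S.Nonempty} → ℝ)
    (hab : a + b = 1) :
    hFun n ε (a • x + b • y) = a * hFun n ε x + b * hFun n ε y := by
  simp only [hFun_eq]
  have h1 : ∀ S : {S : Finset (Fin n) // S.Nonempty},
      (if csupp ε ⊆ S.1 then (-1 : ℝ) ^ (S.1.card - (csupp ε).card) else 0)
        * (a • x + b • y) S
      = a * ((if csupp ε ⊆ S.1 then (-1 : ℝ) ^ (S.1.card - (csupp ε).card) else 0) * x S)
        + b * ((if csupp ε ⊆ S.1 then (-1 : ℝ) ^ (S.1.card - (csupp ε).card) else 0) * y S) := by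
    intro S
    simp only [Pi.add_apply, Pi.smul_apply, smul_eq_mul]
    ring
  rw [Finset.sum_congr rfl (fun S _ => h1 S), Finset.sum_add_distrib, ← Finset.mul_sum,
    ← Finset.mul_sum]
  have : a * (if csupp ε = ∅ then (1:ℝ) else 0) + b * (if csupp ε = ∅ then (1:ℝ) else 0)
      = (if csupp ε = ∅ then (1:ℝ) else 0) := by
    rw [← add_mul, hab, one_mul]
  linarith [this]

lemma exists_of_mem_CP {p : {S : Finset (Fin n) // S.Nonempty} → ℝ} (hp : p ∈ CP n) :
    ∃ W : (Fin n → Bool) → ℝ, (∀ δ, 0 ≤ W δ) ∧ ∑ δ, W δ = 1 ∧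
      ∑ δ, W δ • cpVertex n δ = p := by
  rw [CP, convexHull_range_eq_exists_affineCombination] at hp
  obtain ⟨s, w, hw0, hw1, hp⟩ := hp
  refine ⟨fun δ => if δ ∈ s then w δ else 0, ?_, ?_, ?_⟩
  · intro δ
    dsimp only
    by_cases h : δ ∈ s
    · rw [if_pos h]; exact hw0 δ h
    · rw [if_neg h]
  · rw [Finset.sum_ite_mem, Finset.univ_inter, hw1]
  · simp only [ite_smul, zero_smul]
    rw [Finset.sum_ite_mem, Finset.univ_inter,
      ← Finset.affineCombination_eq_linear_combination s (cpVertex n) w hw1, hp]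

lemma hFun_nonneg (ε : Fin n → Bool) : ∀ p ∈ CP n, 0 ≤ hFun n ε p := by
  intro p hp
  obtain ⟨W, hW0, hW1, rfl⟩ := exists_of_mem_CP hp
  rw [hFun_comb_one ε W hW1]
  exact hW0 ε

lemma cpFace_eq (ε : Fin n → Bool) :
    cpFace n ε = convexHull ℝ (cpVertex n '' {δ | δ ≠ ε}) := by
  apply Set.Subset.antisymm
  · rintro p ⟨hp, h0⟩
    obtain ⟨W, hW0, hW1, rfl⟩ := exists_of_mem_CP hp
    rw [hFun_comb_one ε W hW1] at h0
    have hsum : ∑ δ ∈ Finset.univ.erase ε, W δ = 1 := by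
      rw [Finset.sum_erase_eq_sub (Finset.mem_univ ε), hW1, h0, sub_zero]
    have := Finset.centerMass_mem_convexHull (t := Finset.univ.erase ε)
      (w := W) (z := cpVertex n) (R := ℝ) (s := cpVertex n '' {δ | δ ≠ ε})
      (fun δ _ => hW0 δ) (by rw [hsum]; norm_num)
      (fun δ hδ => ⟨δ, Finset.ne_of_mem_erase hδ, rfl⟩)
    have hcm : (Finset.univ.erase ε).centerMass W (cpVertex n)
        = ∑ δ, W δ • cpVertex n δ := by
      rw [Finset.centerMass, hsum, inv_one, one_smul,
        ← Finset.sum_erase_add Finset.univ _ (Finset.mem_univ ε), h0, zero_smul, add_zero]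
    rwa [hcm] at this
  · apply convexHull_min
    · rintro _ ⟨δ, hδ, rfl⟩
      refine ⟨subset_convexHull ℝ _ ⟨δ, rfl⟩, ?_⟩
      rw [hFun_vertex, if_neg hδ]
    · intro x hx y hy a b ha hb hab
      exact ⟨(convex_convexHull ℝ _) hx.1 hy.1 ha hb hab,
        by rw [hFun_affine ε a b x y hab, hx.2, hy.2, mul_zero, mul_zero, add_zero]⟩

lemma cpFace_injective : Function.Injective (cpFace (n := n)) := by
  intro ε₁ ε₂ h
  by_contra hne
  have h1 : cpVertex n ε₁ ∈ cpFace n ε₂ := by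
    rw [cpFace_eq]
    exact subset_convexHull ℝ _ ⟨ε₁, hne, rfl⟩
  rw [← h] at h1
  have := h1.2
  rw [hFun_vertex, if_pos rfl] at this
  norm_num at this

lemma cp_affineIndependent : AffineIndependent ℝ (cpVertex n) := by
  rw [affineIndependent_iff]
  intro s w hw0 hwv e he
  have hWs : ∑ δ, (if δ ∈ s then w δ else 0) = 0 := by
    rw [Finset.sum_ite_mem, Finset.univ_inter, hw0]
  have hWv : ∑ δ, (if δ ∈ s then w δ else 0) • cpVertex n δ = 0 := by
    simp only [ite_smul, zero_smul]
    rw [Finset.sum_ite_mem, Finset.univ_inter, hwv]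
  have h1 := hFun_comb e (fun δ => if δ ∈ s then w δ else 0)
  rw [hWv, hWs] at h1
  have h2 := hFun_comb e (fun _ => (0 : ℝ))
  simp only [zero_smul, Finset.sum_const_zero] at h2
  have h3 : (if e ∈ s then w e else 0) = 0 := by
    have h4 := h1.symm.trans h2
    beta_reduce at h4
    linarith
  rwa [if_pos he] at h3

end aux

/-- `CP_n` is a simplex on `2^n` affinely independent vertices; each of
the `2^n` inequalities `h(ε) ≥ 0` is valid and cuts out the facet spanned by the
remaining `2^n − 1` vertices; these facets are pairwise distinct, so `CP_n` has
exactly `2^n` of them. -/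
theorem cp_simplex_and_facets (n : ℕ) :
    AffineIndependent ℝ (cpVertex n) ∧
    (∀ ε : Fin n → Bool, ∀ p ∈ CP n, 0 ≤ hFun n ε p) ∧
    (∀ ε : Fin n → Bool,
      cpFace n ε = convexHull ℝ (cpVertex n '' {δ | δ ≠ ε})) ∧
    Function.Injective (cpFace n) ∧
    (Set.range (cpFace n)).ncard = 2 ^ n := by
  classical
  refine ⟨cp_affineIndependent, hFun_nonneg, cpFace_eq, cpFace_injective, ?_⟩
  have h1 : Set.range (cpFace n) = ↑(Finset.univ.image (cpFace n)) := by
    ext x; simp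
  rw [h1, Set.ncard_coe_finset, Finset.card_image_of_injective _ cpFace_injective,
    Finset.card_univ]
  simp
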